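/- Let p : K ⥤ G be a fibration between groupoids with kernel N (the wide subgroupoid of arrows sent to identities), and let M be a wide subgroupoid of K with inclusion i. Then p ∘ i is a discrete fibration if and only if for every arrow k of K there exist unique arrows m ∈ M and n ∈ N with k = m ∘ n. -/

import Mathlib

open CategoryTheory

/-- A functor between groupoids is a *discrete fibration* if every arrow of the
target with source `f.obj x` admits a unique lift with source `x`. -/
def IsDiscreteFibration {H G : Type*} [CategoryTheory.Category H] [CategoryTheory.Category G]
    (f : H ⥤ G) : Prop :=
  ∀ (x : H) (c : G) (a : f.obj x ⟶ c),
    ∃! e : Σ y : H, x ⟶ y,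
      (⟨f.obj e.1, f.map e.2⟩ : Σ d : G, (f.obj x ⟶ d)) = ⟨c, a⟩

/-- A functor between groupoids is a *fibration* if every arrow of the
target with source `f.obj x` admits a (not necessarily unique) lift with source `x`. -/
def IsFibration {H G : Type*} [CategoryTheory.Category H] [CategoryTheory.Category G]
    (f : H ⥤ G) : Prop :=
  ∀ (x : H) (c : G) (a : f.obj x ⟶ c),
    ∃ e : Σ y : H, x ⟶ y,
      (⟨f.obj e.1, f.map e.2⟩ : Σ d : G, (f.obj x ⟶ d)) = ⟨c, a⟩



/-- An arrow belongs to the *kernel* of a functor if it is sent to an identity arrow. -/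
def InKer {K G : Type*} [CategoryTheory.Category K] [CategoryTheory.Category G]
    (p : K ⥤ G) {x y : K} (k : x ⟶ y) : Prop :=
  (⟨p.obj y, p.map k⟩ : Σ c : G, (p.obj x ⟶ c)) = ⟨p.obj x, 𝟙 (p.obj x)⟩

lemma sig_eq_iff {G : Type*} [Category G] {c d d' : G} (f : c ⟶ d) (f' : c ⟶ d') :
    (⟨d, f⟩ : Σ e : G, c ⟶ e) = ⟨d', f'⟩ ↔ ∃ h : d = d', f ≫ eqToHom h = f' := by
  constructor
  · intro h
    obtain ⟨h1, h2⟩ := Sigma.mk.inj_iff.mp h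
    subst h1
    exact ⟨rfl, by simpa using eq_of_heq h2⟩
  · rintro ⟨rfl, rfl⟩; simp

theorem stmt18 {K G : Type*} [Groupoid K] [Groupoid G] (p : K ⥤ G)
    (hp : IsFibration p) (M : Subgroupoid K) (hM : M.IsWide) :
    (∀ (x : K) (c : G) (a : p.obj x ⟶ c),
        ∃! e : Σ y : K, x ⟶ y,
          e.2 ∈ M.arrows x e.1 ∧
          (⟨p.obj e.1, p.map e.2⟩ : Σ d : G, (p.obj x ⟶ d)) = ⟨c, a⟩) ↔
    (∀ {x y : K} (k : x ⟶ y),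
        ∃! t : Σ z : K, (x ⟶ z) × (z ⟶ y),
          InKer p t.2.1 ∧ t.2.2 ∈ M.arrows t.1 y ∧ t.2.1 ≫ t.2.2 = k) := by
  constructor
  · intro H x y k
    obtain ⟨⟨z₀, m₀⟩, ⟨hm₀M, hm₀p⟩, huniq⟩ := H y (p.obj x) (Groupoid.inv (p.map k))
    obtain ⟨h₀, hc₀⟩ := (sig_eq_iff _ _).mp hm₀p
    refine ⟨⟨z₀, (k ≫ m₀, Groupoid.inv m₀)⟩, ⟨?_, M.inv hm₀M, by simp⟩, ?_⟩
    · rw [InKer, sig_eq_iff]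
      exact ⟨h₀, by
        rw [Functor.map_comp, Category.assoc, hc₀]
        simp [Groupoid.inv_eq_inv]⟩
    · rintro ⟨z, n, m⟩ ⟨hn, hmM, hcomp⟩
      obtain ⟨h, hc⟩ := (sig_eq_iff _ _).mp hn
      have hpn : p.map n = eqToHom h.symm := by
        calc p.map n = (p.map n ≫ eqToHom h) ≫ eqToHom h.symm := by simp
        _ = eqToHom h.symm := by rw [hc]; simp
      have key : (⟨z, Groupoid.inv m⟩ : Σ w : K, y ⟶ w) = ⟨z₀, m₀⟩ := by
        refine huniq _ ⟨M.inv hmM, ?_⟩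
        rw [sig_eq_iff]
        refine ⟨h, ?_⟩
        have hk : p.map k = eqToHom h.symm ≫ p.map m := by
          rw [← hcomp, Functor.map_comp, hpn]
        rw [hk]
        simp [Groupoid.inv_eq_inv]
      obtain ⟨hz, hm'⟩ := Sigma.mk.inj_iff.mp key
      subst hz
      have hm : Groupoid.inv m = m₀ := eq_of_heq hm'
      have hmm : m = Groupoid.inv m₀ := by rw [← hm]; simp
      have hn' : n = k ≫ m₀ := by
        rw [← hm]
        calc n = (n ≫ m) ≫ Groupoid.inv m := by simp
        _ = k ≫ Groupoid.inv m := by rw [hcomp]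
      simp [hn', hmm]
  · intro H x c a
    obtain ⟨⟨y, k⟩, hk⟩ := hp x c a
    obtain ⟨h2, hc2⟩ := (sig_eq_iff _ _).mp hk
    obtain ⟨⟨z, n, m⟩, ⟨hnK, hmM, hcomp⟩, huniq⟩ := H (Groupoid.inv k)
    obtain ⟨h1, hc1⟩ := (sig_eq_iff _ _).mp hnK
    refine ⟨⟨z, Groupoid.inv m⟩, ⟨M.inv hmM, ?_⟩, ?_⟩
    · rw [sig_eq_iff]
      refine ⟨h1.trans h2, ?_⟩
      have him : Groupoid.inv m = k ≫ n := by
        have hm' : m = Groupoid.inv n ≫ Groupoid.inv k := by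
          calc m = Groupoid.inv n ≫ (n ≫ m) := by simp
          _ = Groupoid.inv n ≫ Groupoid.inv k := by rw [hcomp]
        rw [hm']
        simp
      rw [him]
      have he : eqToHom (h1.trans h2) = eqToHom h1 ≫ eqToHom h2 := by simp
      rw [Functor.map_comp, Category.assoc, he, ← Category.assoc (p.map n), hc1]
      simpa using hc2
    · rintro ⟨y', m''⟩ ⟨hm''M, hm''p⟩
      obtain ⟨h3, hc3⟩ := (sig_eq_iff _ _).mp hm''p
      have hpk : p.map k = a ≫ eqToHom h2.symm := by
        rw [← hc2]; simp
      have hpm'' : p.map m'' = a ≫ eqToHom h3.symm := by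
        rw [← hc3]; simp
      have key : (⟨y', (Groupoid.inv k ≫ m'', Groupoid.inv m'')⟩ :
          Σ w : K, (y ⟶ w) × (w ⟶ x)) = ⟨z, (n, m)⟩ := by
        refine huniq _ ⟨?_, M.inv hm''M, by simp⟩
        rw [InKer, sig_eq_iff]
        refine ⟨h3.trans h2.symm, ?_⟩
        rw [Functor.map_comp, Groupoid.inv_eq_inv, Functor.map_inv]
        simp [hpk, hpm'']
      obtain ⟨hz, hm'⟩ := Sigma.mk.inj_iff.mp key
      subst hz
      have := eq_of_heq hm'
      have hm2 : Groupoid.inv m'' = m := (Prod.mk_inj.mp this).2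
      have : m'' = Groupoid.inv m := by rw [← hm2]; simp
      simp [this]
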